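/- Let F ⊆ Q be fields and let Q(X) be the field of rational functions over Q. The Q-subalgebra of Q(X) generated by the subfield F(X) (equivalently, the image of the canonical map F(X) ⊗_F Q → Q(X)) consists exactly of those f ∈ Q(X) whose denominator denom(f) divides, in Q[X], some nonzero polynomial g ∈ F[X]. -/

import Mathlib

open scoped nonZeroDivisors

section aux

variable {F Q : Type*} [Field F] [Field Q] [Algebra F Q]

private theorem stmt8_hcomap : (Polynomial F)⁰ ≤
    (Polynomial Q)⁰.comap (Polynomial.mapRingHom (algebraMap F Q)) := fun x hx => by
  simpa only [Submonoid.mem_comap, Polynomial.coe_mapRingHom,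
    mem_nonZeroDivisors_iff_ne_zero] using
    (Polynomial.map_ne_zero_iff (algebraMap F Q).injective).mpr
      (mem_nonZeroDivisors_iff_ne_zero.mp hx)

private theorem stmt8_map_algebraMap (p : Polynomial F) :
    RatFunc.mapRingHom (Polynomial.mapRingHom (algebraMap F Q)) stmt8_hcomap
        (algebraMap _ (RatFunc F) p) =
      algebraMap _ (RatFunc Q) (p.map (algebraMap F Q)) := by
  have h := RatFunc.map_apply_div (Polynomial.mapRingHom (algebraMap F Q)) stmt8_hcomap p 1
  simp only [map_one, div_one] at h
  rw [RatFunc.coe_mapRingHom_eq_coe_map]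
  exact h

end aux

/-- **Characterisation of `F(X) ⊗_F Q` inside `Q(X)` via denominators.**
Let `F ⊆ Q` be fields.  The `Q`-subalgebra of `Q(X)` generated by the subfield `F(X)`
(the image of the canonical map `F(X) ⊗_F Q → Q(X)`) consists exactly of those `f ∈ Q(X)`
whose (monic) denominator divides, in `Q[X]`, some nonzero polynomial with coefficients
in `F`. -/
theorem stmt8 {F Q : Type*} [Field F] [Field Q] [Algebra F Q] (f : RatFunc Q) :
    f ∈ Algebra.adjoin Q
        (Set.range (RatFunc.mapRingHom (Polynomial.mapRingHom (algebraMap F Q))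
          (fun x hx => by
            simpa only [Submonoid.mem_comap, Polynomial.coe_mapRingHom,
              mem_nonZeroDivisors_iff_ne_zero] using
              (Polynomial.map_ne_zero_iff (algebraMap F Q).injective).mpr
                (mem_nonZeroDivisors_iff_ne_zero.mp hx)) : RatFunc F → RatFunc Q)) ↔
      ∃ g : Polynomial F, g ≠ 0 ∧ f.denom ∣ g.map (algebraMap F Q) := by
  set φ := RatFunc.mapRingHom (Polynomial.mapRingHom (algebraMap F Q))
    (stmt8_hcomap (F := F) (Q := Q)) with hφdef
  show f ∈ Algebra.adjoin Q (Set.range (φ : RatFunc F → RatFunc Q)) ↔ _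
  constructor
  · intro hf
    let T : Subalgebra Q (RatFunc Q) :=
      { carrier := {x | ∃ g : Polynomial F, g ≠ 0 ∧ x.denom ∣ g.map (algebraMap F Q)}
        mul_mem' := by
          rintro x y ⟨g₁, hg₁, hd₁⟩ ⟨g₂, hg₂, hd₂⟩
          exact ⟨g₁ * g₂, mul_ne_zero hg₁ hg₂, by
            rw [Polynomial.map_mul]
            exact (RatFunc.denom_mul_dvd x y).trans (mul_dvd_mul hd₁ hd₂)⟩
        add_mem' := by
          rintro x y ⟨g₁, hg₁, hd₁⟩ ⟨g₂, hg₂, hd₂⟩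
          exact ⟨g₁ * g₂, mul_ne_zero hg₁ hg₂, by
            rw [Polynomial.map_mul]
            exact (RatFunc.denom_add_dvd x y).trans (mul_dvd_mul hd₁ hd₂)⟩
        one_mem' := ⟨1, one_ne_zero, by simp⟩
        algebraMap_mem' := fun c => ⟨1, one_ne_zero, by
          rw [IsScalarTower.algebraMap_apply Q (Polynomial Q) (RatFunc Q),
            RatFunc.denom_algebraMap]
          exact one_dvd _⟩ }
    have hmem : f ∈ T := Algebra.adjoin_le (fun x hx => ?_) hf
    · exact hmem
    obtain ⟨r, rfl⟩ := hx
    refine ⟨r.denom, RatFunc.denom_ne_zero r, ?_⟩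
    have hden : (r.denom.map (algebraMap F Q)) ≠ 0 :=
      (Polynomial.map_ne_zero_iff (algebraMap F Q).injective).mpr (RatFunc.denom_ne_zero r)
    rw [RatFunc.denom_dvd hden]
    refine ⟨r.num.map (algebraMap F Q), ?_⟩
    rw [hφdef, RatFunc.coe_mapRingHom_eq_coe_map, RatFunc.map_apply]
    rfl
  · rintro ⟨g, hg, h, hh⟩
    -- f.denom * h = g.map (algebraMap F Q)
    have hgmap : g.map (algebraMap F Q) ≠ 0 :=
      (Polynomial.map_ne_zero_iff (algebraMap F Q).injective).mpr hg
    have hh0 : h ≠ 0 := by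
      rintro rfl; rw [mul_zero] at hh; exact hgmap hh
    have hX : (RatFunc.X : RatFunc Q) ∈
        Algebra.adjoin Q (Set.range (φ : RatFunc F → RatFunc Q)) := by
      refine Algebra.subset_adjoin ⟨RatFunc.X, ?_⟩
      rw [← RatFunc.algebraMap_X, ← RatFunc.algebraMap_X, stmt8_map_algebraMap,
        Polynomial.map_X]
    have hpoly : ∀ p : Polynomial Q, algebraMap _ (RatFunc Q) p ∈
        Algebra.adjoin Q (Set.range (φ : RatFunc F → RatFunc Q)) := by
      intro p
      induction p using Polynomial.induction_on with
      | C a => rw [RatFunc.algebraMap_C]; exact Subalgebra.algebraMap_mem _ a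
      | add p q hp hq => rw [map_add]; exact add_mem hp hq
      | monomial n a hp =>
        rw [pow_succ, ← mul_assoc, map_mul, RatFunc.algebraMap_X]
        exact mul_mem hp hX
    have hinv : (algebraMap _ (RatFunc Q) (g.map (algebraMap F Q)))⁻¹ ∈
        Algebra.adjoin Q (Set.range (φ : RatFunc F → RatFunc Q)) := by
      refine Algebra.subset_adjoin ⟨(algebraMap _ (RatFunc F) g)⁻¹, ?_⟩
      rw [map_inv₀, stmt8_map_algebraMap]
    have key : f = algebraMap _ (RatFunc Q) (f.num * h) *
        (algebraMap _ (RatFunc Q) (g.map (algebraMap F Q)))⁻¹ := by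
      rw [hh, map_mul, map_mul, mul_inv]
      rw [mul_comm (algebraMap _ _ f.denom)⁻¹, ← mul_assoc, mul_assoc _ _ (algebraMap _ _ h)⁻¹,
        mul_inv_cancel₀ (by
          simpa using (RatFunc.algebraMap_ne_zero hh0 : algebraMap _ (RatFunc Q) h ≠ 0)),
        mul_one, ← div_eq_mul_inv, RatFunc.num_div_denom]
    rw [key]
    exact mul_mem (hpoly _) hinv
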